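/- Riemann–Lebesgue lemma for the CCR transform: for every trace-class operator A on L²(ℝ), the function Â(z) = trace(A W_z) tends to 0 as |z| → ∞. -/

import Mathlib

open MeasureTheory Complex Filter
open scoped ComplexOrder

noncomputable section

/-- The symplectic form `ω((x,y),(x',y')) = (x'y − xy')/2` on `ℝ²`. -/
def symp (z w : ℝ × ℝ) : ℝ := (w.1 * z.2 - z.1 * w.2) / 2

variable (H : Type) [NormedAddCommGroup H] [InnerProductSpace ℂ H] [CompleteSpace H]

/-- A Weyl system: a strongly continuous family of unitaries satisfying the Weyl relation. -/
structure WeylSystem where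
  W : ℝ × ℝ → H →L[ℂ] H
  unitary_mem : ∀ z, W z ∈ unitary (H →L[ℂ] H)
  strong_cont : ∀ f : H, Continuous fun z => W z f
  weyl : ∀ z₁ z₂, W z₁ * W z₂ = Complex.exp (Complex.I * (symp z₁ z₂ : ℂ)) • W (z₁ + z₂)

variable {H}

/-- Irreducibility: any operator commuting with all the `W z` is a scalar. -/
def WeylSystem.Irreducible (S : WeylSystem H) : Prop :=
  ∀ T : H →L[ℂ] H, (∀ z, T * S.W z = S.W z * T) → ∃ c : ℂ, T = c • (1 : H →L[ℂ] H)

/-- Conjugation `A ↦ W_{ζ/√2} A W_{ζ/√2}*`. -/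
def WeylSystem.conj (S : WeylSystem H) (ζ : ℝ × ℝ) (A : H →L[ℂ] H) : H →L[ℂ] H :=
  S.W ((Real.sqrt 2)⁻¹ • ζ) * A * star (S.W ((Real.sqrt 2)⁻¹ • ζ))

/-- Normal (weak-* continuous) linear functionals on `B(H)`. -/
def IsNormalFunctional (ρ : (H →L[ℂ] H) → ℂ) : Prop :=
  ∃ ξ η : ℕ → H, Summable (fun n => ‖ξ n‖ * ‖η n‖) ∧
    ∀ A : H →L[ℂ] H, ρ A = ∑' n, @inner ℂ _ _ (A (ξ n)) (η n)

/-- Normal states on `B(H)`. -/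
def IsNormalState (ρ : (H →L[ℂ] H) → ℂ) : Prop :=
  IsNormalFunctional ρ ∧ (∀ A : H →L[ℂ] H, 0 ≤ ρ (star A * A)) ∧ ρ 1 = 1

/-- The norm of a (bounded) linear functional on `B(H)`. -/
def funcNorm (ρ : (H →L[ℂ] H) → ℂ) : ℝ :=
  ⨆ A : {A : H →L[ℂ] H // ‖A‖ ≤ 1}, ‖ρ A.1‖

/-- The Gaussian probability measure `μ_t` on `ℝ²`, with density `(πt)⁻¹ e^{−(x²+y²)/(4t)}`,
whose symplectic Fourier transform is `e^{−t|z|²}`. -/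
def gaussMeasure (t : ℝ) : Measure (ℝ × ℝ) :=
  volume.withDensity fun p => ENNReal.ofReal ((Real.pi * t)⁻¹ * Real.exp (-(p.1 ^ 2 + p.2 ^ 2) / (4 * t)))

/-- `Φ` is the CCR heat flow semigroup: `Φ 0` is the identity and for `t > 0`, `Φ t` is given by
the weak integral `Φ t A = ∫ W_{ζ/√2} A W_{ζ/√2}* dμ_t(ζ)` against the Gaussian measure. -/
def IsHeatFlow (S : WeylSystem H) (Φ : ℝ → (H →L[ℂ] H) → (H →L[ℂ] H)) : Prop :=
  Φ 0 = id ∧ ∀ t > 0, ∀ (A : H →L[ℂ] H) (ξ η : H),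
    @inner ℂ _ _ ((Φ t A) ξ) η = ∫ ζ, @inner ℂ _ _ ((S.conj ζ A) ξ) η ∂(gaussMeasure t)


lemma unitary_norm_map {H : Type} [NormedAddCommGroup H] [InnerProductSpace ℂ H] [CompleteSpace H]
    (W : H →L[ℂ] H) (hW : W ∈ unitary (H →L[ℂ] H)) (f : H) : ‖W f‖ = ‖f‖ := by
  have h1 : star W * W = 1 := hW.1
  have h2 : @inner ℂ _ _ (W f) (W f) = @inner ℂ _ _ f f := by
    rw [← ContinuousLinearMap.adjoint_inner_left, ← ContinuousLinearMap.star_eq_adjoint,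
      ← ContinuousLinearMap.mul_apply, h1, ContinuousLinearMap.one_apply]
  have := congrArg Complex.re h2
  rw [show ((@inner ℂ _ _ (W f) (W f) : ℂ)).re = ‖W f‖^2 from inner_self_eq_norm_sq (𝕜 := ℂ) _,
    show ((@inner ℂ _ _ f f : ℂ)).re = ‖f‖^2 from inner_self_eq_norm_sq (𝕜 := ℂ) _] at this
  nlinarith [norm_nonneg (W f), norm_nonneg f]


lemma integrand_cont (φ ψ : ℝ → ℂ) (hφc : Continuous φ) (hψc : Continuous ψ) (x y : ℝ) :
    Continuous (fun s : ℝ => (starRingEnd ℂ) (φ s) *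
      (Complex.exp (Complex.I * ((x * s : ℝ) : ℂ)) * ψ (s + y))) := by
  exact (Complex.continuous_conj.comp hφc).mul ((Complex.continuous_exp.comp (by fun_prop)).mul (hψc.comp (by fun_prop)))

lemma integrand_int (φ ψ : ℝ → ℂ) (hφc : Continuous φ) (hφs : HasCompactSupport φ)
    (hψc : Continuous ψ) (x y : ℝ) :
    Integrable (fun s : ℝ => (starRingEnd ℂ) (φ s) *
      (Complex.exp (Complex.I * ((x * s : ℝ) : ℂ)) * ψ (s + y))) := by
  exact (integrand_cont φ ψ hφc hψc x y).integrable_of_hasCompactSupport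
    ((hφs.comp_left (g := starRingEnd ℂ) (map_zero _)).mul_right)

lemma fixed_y (φ ψ : ℝ → ℂ) (y : ℝ) :
    Tendsto (fun x : ℝ => ∫ s : ℝ, (starRingEnd ℂ) (φ s) *
      (Complex.exp (Complex.I * ((x * s : ℝ) : ℂ)) * ψ (s + y))) (cocompact ℝ) (nhds 0) := by
  set h : ℝ → ℂ := fun s => (starRingEnd ℂ) (φ s) * ψ (s + y) with hh
  have RL := Real.tendsto_integral_exp_smul_cocompact h
  have hc : (-(2 * Real.pi)⁻¹ : ℝ) ≠ 0 := by
    simp only [ne_eq, neg_eq_zero, inv_eq_zero]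
    positivity
  have hm : Tendsto (fun x : ℝ => x * (-(2 * Real.pi)⁻¹)) (cocompact ℝ) (cocompact ℝ) :=
    Filter.tendsto_cocompact_mul_right₀ hc
  have key := RL.comp hm
  refine key.congr (fun x => ?_)
  simp only [Function.comp]
  refine integral_congr_ae (Eventually.of_forall (fun s => ?_))
  simp only [Circle.smul_def, Real.fourierChar_apply, hh]
  have harg : (2 * Real.pi * -(s * (x * (-(2 * Real.pi)⁻¹))) : ℝ) = x * s := by
    field_simp
  rw [harg, smul_eq_mul]
  ring

lemma core_tendsto (φ ψ : ℝ → ℂ) (hφc : Continuous φ) (hφs : HasCompactSupport φ)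
    (hψc : Continuous ψ) (hψs : HasCompactSupport ψ) :
    Tendsto (fun z : ℝ × ℝ => ∫ s : ℝ, (starRingEnd ℂ) (φ s) *
      (Complex.exp (Complex.I * ((z.1 * s : ℝ) : ℂ)) * ψ (s + z.2)))
      (cocompact (ℝ × ℝ)) (nhds 0) := by
  -- support radius
  obtain ⟨R, hR0, hRsub⟩ := ((hφs.union hψs).isBounded.subset_ball_lt 0 0)
  have hφ0 : ∀ s : ℝ, R ≤ |s| → φ s = 0 := by
    intro s hs
    by_contra h
    have : s ∈ Metric.ball (0:ℝ) R := hRsub (Set.mem_union_left _ (subset_tsupport φ h))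
    rw [Metric.mem_ball, Real.dist_eq, sub_zero] at this
    linarith
  have hψ0 : ∀ s : ℝ, R ≤ |s| → ψ s = 0 := by
    intro s hs
    by_contra h
    have : s ∈ Metric.ball (0:ℝ) R := hRsub (Set.mem_union_right _ (subset_tsupport ψ h))
    rw [Metric.mem_ball, Real.dist_eq, sub_zero] at this
    linarith
  set G : ℝ × ℝ → ℂ := fun z => ∫ s : ℝ, (starRingEnd ℂ) (φ s) *
      (Complex.exp (Complex.I * ((z.1 * s : ℝ) : ℂ)) * ψ (s + z.2)) with hG
  -- vanishing for large |y|
  have hzero : ∀ x y : ℝ, 2 * R ≤ |y| → G (x, y) = 0 := by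
    intro x y hy
    rw [hG]
    have : ∀ s : ℝ, (starRingEnd ℂ) (φ s) *
        (Complex.exp (Complex.I * ((x * s : ℝ) : ℂ)) * ψ (s + y)) = 0 := by
      intro s
      by_cases hs : R ≤ |s|
      · rw [hφ0 s hs]; simp
      · push_neg at hs
        have : R ≤ |s + y| := by
          have h1 := abs_add_le (s + y) (-s)
          rw [abs_neg] at h1
          have h2 : s + y + -s = y := by ring
          rw [h2] at h1
          linarith
        rw [hψ0 _ this]; simp
    simp only [this, integral_zero]
  -- difference estimate
  have hφint : Integrable (fun s : ℝ => ‖φ s‖) :=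
    (hφc.integrable_of_hasCompactSupport hφs).norm
  set Cφ : ℝ := ∫ s : ℝ, ‖φ s‖ with hCφ
  have hCφ0 : 0 ≤ Cφ := integral_nonneg (fun s => norm_nonneg _)
  have hdiff : ∀ (x y y' ε' : ℝ), 0 ≤ ε' → (∀ s : ℝ, ‖ψ (s + y) - ψ (s + y')‖ ≤ ε') →
      ‖G (x, y) - G (x, y')‖ ≤ Cφ * ε' := by
    intro x y y' ε' hε' hbd
    rw [hG]
    simp only
    rw [← integral_sub (integrand_int φ ψ hφc hφs hψc x y) (integrand_int φ ψ hφc hφs hψc x y')]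
    have hre : ∀ s : ℝ, (starRingEnd ℂ) (φ s) * (Complex.exp (Complex.I * ((x * s : ℝ) : ℂ)) * ψ (s + y)) -
        (starRingEnd ℂ) (φ s) * (Complex.exp (Complex.I * ((x * s : ℝ) : ℂ)) * ψ (s + y')) =
        (starRingEnd ℂ) (φ s) * (Complex.exp (Complex.I * ((x * s : ℝ) : ℂ)) * (ψ (s + y) - ψ (s + y'))) := by
      intro s; ring
    calc ‖∫ s : ℝ, ((starRingEnd ℂ) (φ s) * (Complex.exp (Complex.I * ((x * s : ℝ) : ℂ)) * ψ (s + y)) -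
          (starRingEnd ℂ) (φ s) * (Complex.exp (Complex.I * ((x * s : ℝ) : ℂ)) * ψ (s + y')))‖
        ≤ ∫ s : ℝ, ‖φ s‖ * ε' := by
          refine norm_integral_le_of_norm_le (hφint.mul_const ε') (Eventually.of_forall (fun s => ?_))
          rw [hre s]
          rw [norm_mul, norm_mul]
          have h1 : ‖(starRingEnd ℂ) (φ s)‖ = ‖φ s‖ := RCLike.norm_conj _
          have h2 : ‖Complex.exp (Complex.I * ((x * s : ℝ) : ℂ))‖ = 1 := by
            rw [mul_comm, Complex.norm_exp_ofReal_mul_I]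
          rw [h1, h2, one_mul]
          exact mul_le_mul_of_nonneg_left (hbd s) (norm_nonneg _)
      _ = Cφ * ε' := by rw [integral_mul_const, hCφ]
  -- conclusion
  rw [NormedAddCommGroup.tendsto_nhds_zero]
  intro ε hε
  rw [Filter.hasBasis_cocompact.eventually_iff]
  -- uniform continuity of ψ
  have hψu : UniformContinuous ψ :=
    hψc.uniformContinuous_of_tendsto_cocompact hψs.is_zero_at_infty
  set ε' : ℝ := ε / (2 * (Cφ + 1)) with hε'
  have hε'0 : 0 < ε' := by positivity
  obtain ⟨δ, hδ0, hδ⟩ := Metric.uniformContinuous_iff.mp hψu ε' hε'0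
  -- finite δ-net of Icc (-(2R)) (2R)
  have hIcc : IsCompact (Set.Icc (-(2*R)) (2*R)) := isCompact_Icc
  obtain ⟨T, hT⟩ := hIcc.elim_finite_subcover (fun y : ℝ => Metric.ball y δ)
    (fun y => Metric.isOpen_ball) (fun y _ => Set.mem_iUnion.mpr ⟨y, Metric.mem_ball_self hδ0⟩)
  -- for each y in T, eventual smallness in x
  have hev : ∀ᶠ x in cocompact ℝ, ∀ y ∈ T, ‖G (x, y)‖ < ε / 2 := by
    rw [eventually_all_finset]
    intro y _
    have := (fixed_y φ ψ y).norm
    rw [norm_zero] at this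
    exact this.eventually_lt_const (by positivity) |>.mono (fun x hx => hx)
  obtain ⟨K₁, hK₁c, hK₁⟩ := Filter.hasBasis_cocompact.eventually_iff.mp hev
  obtain ⟨M, hM⟩ := hK₁c.isBounded.subset_ball_lt 0 0
  refine ⟨(Metric.closedBall (0:ℝ) M) ×ˢ (Set.Icc (-(2*R)) (2*R)),
    (isCompact_closedBall _ _).prod isCompact_Icc, ?_⟩
  rintro ⟨x, y⟩ hz
  simp only [Set.mem_compl_iff, Set.mem_prod, not_and_or] at hz
  by_cases hy : y ∈ Set.Icc (-(2*R)) (2*R)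
  · have hx : x ∉ Metric.closedBall (0:ℝ) M := by tauto
    have hxK : x ∉ K₁ := fun h => hx (Metric.ball_subset_closedBall (hM.2 h))
    obtain ⟨y₀, hy₀T, hy₀⟩ : ∃ y₀ ∈ T, y ∈ Metric.ball y₀ δ := by
      have := hT hy
      simpa using this
    have hsmall := hK₁ hxK y₀ hy₀T
    have hnear : ∀ s : ℝ, ‖ψ (s + y) - ψ (s + y₀)‖ ≤ ε' := by
      intro s
      have : dist (s + y) (s + y₀) < δ := by
        rw [Real.dist_eq]
        simpa [Real.dist_eq, abs_sub_comm] using Metric.mem_ball.mp hy₀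
      have := hδ this
      rw [dist_eq_norm] at this
      exact this.le
    have hd := hdiff x y y₀ ε' hε'0.le hnear
    have hCε : Cφ * ε' ≤ ε / 2 := by
      have h1 : Cφ * ε' = ε * (Cφ / (2 * (Cφ + 1))) := by rw [hε']; ring
      have h2 : Cφ / (2 * (Cφ + 1)) ≤ 1 / 2 := by
        rw [div_le_div_iff₀ (by positivity) (by norm_num)]
        nlinarith
      rw [h1]
      calc ε * (Cφ / (2 * (Cφ + 1))) ≤ ε * (1/2) := by nlinarith
        _ = ε / 2 := by ring
    calc ‖G (x, y)‖ ≤ ‖G (x, y) - G (x, y₀)‖ + ‖G (x, y₀)‖ := by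
          simpa using norm_add_le (G (x,y) - G (x,y₀)) (G (x,y₀))
      _ < ε / 2 + ε / 2 := by
          have := hd.trans hCε
          linarith [hsmall]
      _ = ε := by ring
  · have h2R : 2 * R ≤ |y| := by
      simp only [Set.mem_Icc, not_and_or, not_le] at hy
      rcases hy with h | h
      · rw [abs_of_neg (by linarith)]; linarith
      · rw [abs_of_pos (by linarith)]; linarith
    rw [hzero x y h2R, norm_zero]
    exact hε

lemma inner_W_eq (S : WeylSystem (Lp ℂ 2 (volume : Measure ℝ)))
    (hW : ∀ (x y : ℝ) (f : Lp ℂ 2 (volume : Measure ℝ)),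
      ⇑((S.W (x, y)) f) =ᵐ[volume] fun s : ℝ => Complex.exp (Complex.I * ((x * y / 2 : ℝ) : ℂ)) *
        (Complex.exp (Complex.I * ((x * s : ℝ) : ℂ)) * f (s + y)))
    (φ ψ : ℝ → ℂ) (hφm : MemLp φ 2 (volume : Measure ℝ)) (hψm : MemLp ψ 2 (volume : Measure ℝ))
    (z : ℝ × ℝ) :
    @inner ℂ _ _ (hφm.toLp φ) ((S.W z) (hψm.toLp ψ)) =
      Complex.exp (Complex.I * ((z.1 * z.2 / 2 : ℝ) : ℂ)) *
        ∫ s : ℝ, (starRingEnd ℂ) (φ s) *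
          (Complex.exp (Complex.I * ((z.1 * s : ℝ) : ℂ)) * ψ (s + z.2)) := by
  obtain ⟨x, y⟩ := z
  rw [MeasureTheory.L2.inner_def]
  have h1 : ⇑(hφm.toLp φ) =ᵐ[volume] φ := hφm.coeFn_toLp
  have h2 := hW x y (hψm.toLp ψ)
  have h3 : (fun s : ℝ => (⇑(hψm.toLp ψ) : ℝ → ℂ) (s + y)) =ᵐ[volume] (fun s => ψ (s + y)) :=
    (measurePreserving_add_right volume y).quasiMeasurePreserving.ae_eq_comp hψm.coeFn_toLp
  have hcongr : (fun s : ℝ => @inner ℂ _ _ ((hφm.toLp φ) s) (((S.W (x, y)) (hψm.toLp ψ)) s))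
      =ᵐ[volume] (fun s : ℝ => Complex.exp (Complex.I * ((x * y / 2 : ℝ) : ℂ)) *
        ((starRingEnd ℂ) (φ s) * (Complex.exp (Complex.I * ((x * s : ℝ) : ℂ)) * ψ (s + y)))) := by
    filter_upwards [h1, h2, h3] with s hs1 hs2 hs3
    rw [RCLike.inner_apply, hs1, hs2, hs3]
    ring
  rw [integral_congr_ae hcongr, integral_const_mul]

lemma pair_tendsto (S : WeylSystem (Lp ℂ 2 (volume : Measure ℝ)))
    (hW : ∀ (x y : ℝ) (f : Lp ℂ 2 (volume : Measure ℝ)),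
      ⇑((S.W (x, y)) f) =ᵐ[volume] fun s : ℝ => Complex.exp (Complex.I * ((x * y / 2 : ℝ) : ℂ)) *
        (Complex.exp (Complex.I * ((x * s : ℝ) : ℂ)) * f (s + y)))
    (f g : Lp ℂ 2 (volume : Measure ℝ)) :
    Tendsto (fun z : ℝ × ℝ => @inner ℂ _ _ f ((S.W z) g)) (cocompact (ℝ × ℝ)) (nhds 0) := by
  have hWn : ∀ (z : ℝ × ℝ) (u : Lp ℂ 2 (volume : Measure ℝ)), ‖(S.W z) u‖ = ‖u‖ :=
    fun z u => unitary_norm_map _ (S.unitary_mem z) u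
  rw [NormedAddCommGroup.tendsto_nhds_zero]
  intro ε hε
  set ε' : ℝ := min 1 (ε / (4 * (‖f‖ + ‖g‖ + 1))) with hε'def
  have hε'0 : 0 < ε' := lt_min one_pos (by positivity)
  -- approximate f and g
  obtain ⟨φ, hφs, hφe, hφc, hφm⟩ := (Lp.memLp f).exists_hasCompactSupport_eLpNorm_sub_le
    (by norm_num : (2 : ENNReal) ≠ ⊤) (by simp [ENNReal.ofReal_eq_zero, not_le, hε'0] :
      (ENNReal.ofReal ε') ≠ 0)
  obtain ⟨ψ, hψs, hψe, hψc, hψm⟩ := (Lp.memLp g).exists_hasCompactSupport_eLpNorm_sub_le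
    (by norm_num : (2 : ENNReal) ≠ ⊤) (by simp [ENNReal.ofReal_eq_zero, not_le, hε'0] :
      (ENNReal.ofReal ε') ≠ 0)
  set fφ := hφm.toLp φ with hfφ
  set gψ := hψm.toLp ψ with hgψ
  have hdf : ‖f - fφ‖ ≤ ε' := by
    have he : f - fφ = ((Lp.memLp f).sub hφm).toLp (⇑f - φ) := by
      rw [MemLp.toLp_sub (Lp.memLp f) hφm, Lp.toLp_coeFn]
    rw [he, Lp.norm_toLp]
    calc (eLpNorm (⇑f - φ) 2 volume).toReal ≤ (ENNReal.ofReal ε').toReal :=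
          ENNReal.toReal_mono ENNReal.ofReal_ne_top hφe
      _ = ε' := ENNReal.toReal_ofReal hε'0.le
  have hdg : ‖g - gψ‖ ≤ ε' := by
    have he : g - gψ = ((Lp.memLp g).sub hψm).toLp (⇑g - ψ) := by
      rw [MemLp.toLp_sub (Lp.memLp g) hψm, Lp.toLp_coeFn]
    rw [he, Lp.norm_toLp]
    calc (eLpNorm (⇑g - ψ) 2 volume).toReal ≤ (ENNReal.ofReal ε').toReal :=
          ENNReal.toReal_mono ENNReal.ofReal_ne_top hψe
      _ = ε' := ENNReal.toReal_ofReal hε'0.le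
  have hfφn : ‖fφ‖ ≤ ‖f‖ + 1 := by
    have h1 : ‖fφ‖ ≤ ‖f‖ + ‖f - fφ‖ := by
      have := norm_add_le f (fφ - f)
      have h2 : f + (fφ - f) = fφ := by abel
      rw [h2] at this
      have h3 : ‖fφ - f‖ = ‖f - fφ‖ := norm_sub_rev _ _
      linarith
    have h4 : ε' ≤ 1 := min_le_left _ _
    linarith
  -- tendsto of nice pair
  have hnice : Tendsto (fun z : ℝ × ℝ => @inner ℂ _ _ fφ ((S.W z) gψ)) (cocompact (ℝ × ℝ)) (nhds 0) := by
    rw [tendsto_zero_iff_norm_tendsto_zero]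
    have hcore := (core_tendsto φ ψ hφc hφs hψc hψs).norm
    rw [norm_zero] at hcore
    refine hcore.congr (fun z => ?_)
    rw [hfφ, hgψ, inner_W_eq S hW φ ψ hφm hψm z, norm_mul]
    have h2 : ‖Complex.exp (Complex.I * ((z.1 * z.2 / 2 : ℝ) : ℂ))‖ = 1 := by
      rw [mul_comm, Complex.norm_exp_ofReal_mul_I]
    rw [h2, one_mul]
  have hev : ∀ᶠ z in cocompact (ℝ × ℝ), ‖@inner ℂ _ _ fφ ((S.W z) gψ)‖ < ε / 2 := by
    have := hnice.norm
    rw [norm_zero] at this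
    exact this.eventually_lt_const (by positivity)
  filter_upwards [hev] with z hz
  have hsplit : @inner ℂ _ _ f ((S.W z) g) = @inner ℂ _ _ (f - fφ) ((S.W z) g) +
      (@inner ℂ _ _ fφ ((S.W z) (g - gψ)) + @inner ℂ _ _ fφ ((S.W z) gψ)) := by
    rw [map_sub, inner_sub_left, inner_sub_right]
    ring
  have hb1 : ‖@inner ℂ _ _ (f - fφ) ((S.W z) g)‖ ≤ ε' * ‖g‖ := by
    calc ‖@inner ℂ _ _ (f - fφ) ((S.W z) g)‖ ≤ ‖f - fφ‖ * ‖(S.W z) g‖ := norm_inner_le_norm _ _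
      _ = ‖f - fφ‖ * ‖g‖ := by rw [hWn]
      _ ≤ ε' * ‖g‖ := mul_le_mul_of_nonneg_right hdf (norm_nonneg _)
  have hb2 : ‖@inner ℂ _ _ fφ ((S.W z) (g - gψ))‖ ≤ (‖f‖ + 1) * ε' := by
    calc ‖@inner ℂ _ _ fφ ((S.W z) (g - gψ))‖ ≤ ‖fφ‖ * ‖(S.W z) (g - gψ)‖ := norm_inner_le_norm _ _
      _ = ‖fφ‖ * ‖g - gψ‖ := by rw [hWn]
      _ ≤ (‖f‖ + 1) * ε' := mul_le_mul hfφn hdg (norm_nonneg _) (by positivity)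
  have hkey : ε' * (‖g‖ + ‖f‖ + 1) ≤ ε / 4 := by
    have h1 : ε' ≤ ε / (4 * (‖f‖ + ‖g‖ + 1)) := min_le_right _ _
    have h2 : (0:ℝ) < ‖f‖ + ‖g‖ + 1 := by positivity
    rw [div_eq_mul_inv] at h1
    calc ε' * (‖g‖ + ‖f‖ + 1) ≤ (ε * (4 * (‖f‖ + ‖g‖ + 1))⁻¹) * (‖g‖ + ‖f‖ + 1) :=
          mul_le_mul_of_nonneg_right h1 (by positivity)
      _ = ε / 4 := by field_simp; ring
  calc ‖@inner ℂ _ _ f ((S.W z) g)‖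
      ≤ ‖@inner ℂ _ _ (f - fφ) ((S.W z) g)‖ +
        (‖@inner ℂ _ _ fφ ((S.W z) (g - gψ))‖ + ‖@inner ℂ _ _ fφ ((S.W z) gψ)‖) := by
        rw [hsplit]
        exact (norm_add_le _ _).trans (by gcongr; exact norm_add_le _ _)
    _ < ε' * ‖g‖ + ((‖f‖ + 1) * ε' + ε / 2) := by
        have := hb1; have := hb2
        linarith
    _ ≤ ε / 4 + ε / 2 := by nlinarith [hkey, hε'0.le]
    _ < ε := by linarith

/-- Riemann–Lebesgue lemma for the CCR transform: for every trace-class operator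
`A` on `L²(ℝ)` (given by a nuclear representation `A x = ∑' n, ⟨ξ n, x⟩ • η n` with
`∑ ‖ξ n‖ * ‖η n‖ < ∞`, so that `Â(z) = trace (A W_z) = ∑' n, ⟨ξ n, W_z (η n)⟩`), the function
`Â(z)` tends to `0` as `|z| → ∞`. -/
theorem ccr_riemann_lebesgue
    (S : WeylSystem (Lp ℂ 2 (volume : Measure ℝ)))
    (hW : ∀ (x y : ℝ) (f : Lp ℂ 2 (volume : Measure ℝ)),
      ⇑((S.W (x, y)) f) =ᵐ[volume] fun s : ℝ => Complex.exp (Complex.I * ((x * y / 2 : ℝ) : ℂ)) *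
        (Complex.exp (Complex.I * ((x * s : ℝ) : ℂ)) * f (s + y)))
    (ξ η : ℕ → Lp ℂ 2 (volume : Measure ℝ))
    (hsum : Summable fun n => ‖ξ n‖ * ‖η n‖)
    (A : Lp ℂ 2 (volume : Measure ℝ) →L[ℂ] Lp ℂ 2 (volume : Measure ℝ))
    (hA : ∀ x, A x = ∑' n, @inner ℂ _ _ (ξ n) x • η n) :
    Tendsto (fun z : ℝ × ℝ => ∑' n, @inner ℂ _ _ (ξ n) ((S.W z) (η n)))
      (cocompact (ℝ × ℝ)) (nhds 0) := by
  have hbound : ∀ (z : ℝ × ℝ) (n : ℕ), ‖@inner ℂ _ _ (ξ n) ((S.W z) (η n))‖ ≤ ‖ξ n‖ * ‖η n‖ := by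
    intro z n
    calc ‖@inner ℂ _ _ (ξ n) ((S.W z) (η n))‖ ≤ ‖ξ n‖ * ‖(S.W z) (η n)‖ := norm_inner_le_norm _ _
      _ = ‖ξ n‖ * ‖η n‖ := by rw [unitary_norm_map _ (S.unitary_mem z)]
  have := tendsto_tsum_of_dominated_convergence (𝓕 := cocompact (ℝ × ℝ))
    (f := fun z n => @inner ℂ _ _ (ξ n) ((S.W z) (η n))) (g := fun _ => (0 : ℂ)) hsum
    (fun n => pair_tendsto S hW (ξ n) (η n)) (Eventually.of_forall hbound)
  simpa using this
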